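/- Under the hypotheses of the graph Poincaré inequality (finite connected weighted graph G, ψ ∈ ℓ²(G) with Ψ(φ₀) = ⟨ψ, φ₀⟩ ≠ 0), for every f ∈ ℓ²(G): ‖f − (Ψ(f)/Ψ(φ₀)) φ₀‖² ≤ (‖ψ‖² / (λ₁ |Ψ(φ₀)|²)) · ‖∇f‖². -/

import Mathlib

open Finset

/-- Weighted gradient norm squared: `‖∇f‖² = (1/2) Σ_{u,v} |f(u)−f(v)|² w(u,v)`. -/
noncomputable def gradSq {V : Type*} [Fintype V] (w : V → V → ℝ) (f : V → ℂ) : ℝ :=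
  (1 / 2) * ∑ u, ∑ v, ‖f u - f v‖ ^ 2 * w u v

/-- Weighted graph Laplacian: `(Lf)(v) = Σ_u (f(v) − f(u)) w(v,u)`. -/
noncomputable def lap {V : Type*} [Fintype V] (w : V → V → ℝ) (f : V → ℂ) : V → ℂ :=
  fun v => ∑ u, (f v - f u) * ((w v u : ℝ) : ℂ)

/-- Inner product on `ℓ²(G)`. -/
noncomputable def ip {V : Type*} [Fintype V] (ψ f : V → ℂ) : ℂ :=
  ∑ v, (starRingEnd ℂ) (ψ v) * f v

/-- Squared `ℓ²(G)` norm. -/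
noncomputable def nsq {V : Type*} [Fintype V] (f : V → ℂ) : ℝ :=
  ∑ v, ‖f v‖ ^ 2

/-- The graph with weight `w` is connected. -/
def GraphConnected {V : Type*} [Fintype V] (w : V → V → ℝ) : Prop :=
  ∀ u v : V, Relation.ReflTransGen (fun a b => 0 < w a b) u v

/-- `lam1` is the first (smallest) nonzero eigenvalue of the Laplacian of `(V, w)`. -/
def IsFirstNonzeroEig {V : Type*} [Fintype V] (w : V → V → ℝ) (lam1 : ℝ) : Prop :=
  0 < lam1 ∧
  (∃ φ : V → ℂ, φ ≠ 0 ∧ lap w φ = fun v => (lam1 : ℂ) * φ v) ∧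
  ∀ (μ : ℝ) (φ : V → ℂ), φ ≠ 0 → (lap w φ = fun v => (μ : ℂ) * φ v) → μ = 0 ∨ lam1 ≤ μ

section helpers
variable {V : Type*} [Fintype V]

/-- View a function as an element of Euclidean space. -/
def toE {V : Type*} [Fintype V] (x : V → ℂ) : EuclideanSpace ℂ V := WithLp.toLp 2 x

lemma ip_conj (x y : V → ℂ) : ip x y = (starRingEnd ℂ) (ip y x) := by
  simp only [ip, map_sum, map_mul, RingHomCompTriple.comp_apply, RingHom.id_apply,
    Complex.conj_conj]
  exact Finset.sum_congr rfl fun v _ => mul_comm _ _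

lemma ip_add (x y z : V → ℂ) : ip x (fun v => y v + z v) = ip x y + ip x z := by
  simp [ip, mul_add, Finset.sum_add_distrib]

lemma nsq_nonneg (x : V → ℂ) : 0 ≤ nsq x :=
  Finset.sum_nonneg fun v _ => sq_nonneg _

lemma gradSq_sub_const (w : V → V → ℝ) (f : V → ℂ) (z : ℂ) :
    gradSq w (fun v => f v - z) = gradSq w f := by
  rw [gradSq, gradSq]
  congr 1
  refine Finset.sum_congr rfl fun u _ => Finset.sum_congr rfl fun v _ => ?_
  rw [sub_sub_sub_cancel_right]

lemma ip_sub (x y z : V → ℂ) : ip x (fun v => y v - z v) = ip x y - ip x z := by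
  simp [ip, mul_sub, Finset.sum_sub_distrib]

lemma ip_mulc (x y : V → ℂ) (c : ℂ) : ip x (fun v => c * y v) = c * ip x y := by
  rw [ip, ip, Finset.mul_sum]
  exact Finset.sum_congr rfl fun v _ => by ring

lemma ip_self (x : V → ℂ) : ip x x = ((nsq x : ℝ) : ℂ) := by
  rw [ip, nsq]
  push_cast
  exact Finset.sum_congr rfl fun v _ => by
    rw [RCLike.conj_mul]; norm_cast

/-- `ip` is the Euclidean inner product. -/
lemma ip_eq_inner (x y : EuclideanSpace ℂ V) :
    (inner ℂ x y : ℂ) = ip (x : V → ℂ) (y : V → ℂ) := by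
  rw [PiLp.inner_apply, ip]
  exact Finset.sum_congr rfl fun v _ => RCLike.inner_apply' _ _

lemma nsq_eq_norm (x : EuclideanSpace ℂ V) : nsq (x : V → ℂ) = ‖x‖ ^ 2 := by
  rw [EuclideanSpace.norm_eq, Real.sq_sqrt (Finset.sum_nonneg fun v _ => sq_nonneg _)]
  rfl

lemma ip_cs (x y : V → ℂ) : ‖ip x y‖ ^ 2 ≤ nsq x * nsq y := by
  have h := norm_inner_le_norm (𝕜 := ℂ) (toE x) (toE y)
  rw [ip_eq_inner] at h
  have h' : ‖ip x y‖ ≤ ‖toE x‖ * ‖toE y‖ := h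
  have h2 : ‖ip x y‖ ^ 2 ≤ (‖toE x‖ * ‖toE y‖) ^ 2 := by
    nlinarith [norm_nonneg (ip x y)]
  calc ‖ip x y‖ ^ 2 ≤ (‖toE x‖ * ‖toE y‖) ^ 2 := h2
    _ = nsq x * nsq y := by
        rw [mul_pow, ← nsq_eq_norm (toE x), ← nsq_eq_norm (toE y)]; rfl

lemma ip_lap_eq_gradSq (w : V → V → ℝ) (hsymm : ∀ u v, w u v = w v u) (f : V → ℂ) :
    ip f (lap w f) = ((gradSq w f : ℝ) : ℂ) := by
  have h1 : ip f (lap w f)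
      = ∑ v, ∑ u, (starRingEnd ℂ) (f v) * ((f v - f u) * ((w v u : ℝ) : ℂ)) := by
    simp [ip, lap, Finset.mul_sum]
  have h2 : ip f (lap w f)
      = ∑ v, ∑ u, (starRingEnd ℂ) (f u) * ((f u - f v) * ((w v u : ℝ) : ℂ)) := by
    rw [h1, Finset.sum_comm]
    exact Finset.sum_congr rfl fun v _ => Finset.sum_congr rfl fun u _ => by rw [hsymm]
  have key : ∀ (a b : ℂ) (t : ℝ),
      (starRingEnd ℂ) a * ((a - b) * (t : ℂ)) + (starRingEnd ℂ) b * ((b - a) * (t : ℂ))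
        = ((‖a - b‖ ^ 2 * t : ℝ) : ℂ) := by
    intro a b t
    have : (starRingEnd ℂ) (a - b) * (a - b) = ((‖a - b‖ : ℝ) : ℂ) ^ 2 := RCLike.conj_mul _
    push_cast
    rw [← this, map_sub]
    ring
  have h3 : ip f (lap w f) + ip f (lap w f)
      = ∑ v, ∑ u, ((‖f v - f u‖ ^ 2 * w v u : ℝ) : ℂ) := by
    nth_rewrite 2 [h2]
    nth_rewrite 1 [h1]
    rw [← Finset.sum_add_distrib]
    exact Finset.sum_congr rfl fun v _ => by
      rw [← Finset.sum_add_distrib]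
      exact Finset.sum_congr rfl fun u _ => key _ _ _
  have hg : ((gradSq w f : ℝ) : ℂ) + ((gradSq w f : ℝ) : ℂ)
      = ∑ v, ∑ u, ((‖f v - f u‖ ^ 2 * w v u : ℝ) : ℂ) := by
    rw [gradSq]
    push_cast
    ring
  have := h3.trans hg.symm
  have h2ne : (2 : ℂ) ≠ 0 := two_ne_zero
  apply mul_left_cancel₀ h2ne
  rw [two_mul, two_mul, this]

lemma ip_lap_symm (w : V → V → ℝ) (hsymm : ∀ u v, w u v = w v u) (g f : V → ℂ) :
    ip (lap w g) f = ip g (lap w f) := by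
  have hL : ip (lap w g) f
      = ∑ v, ∑ u, ((starRingEnd ℂ) (g v) - (starRingEnd ℂ) (g u)) * ((w v u : ℝ) : ℂ) * f v := by
    rw [ip]
    refine Finset.sum_congr rfl fun v _ => ?_
    rw [lap]
    simp only [map_sum, map_mul, map_sub, Complex.conj_ofReal]
    rw [Finset.sum_mul]
  have hR : ip g (lap w f)
      = ∑ v, ∑ u, (starRingEnd ℂ) (g v) * ((f v - f u) * ((w v u : ℝ) : ℂ)) := by
    simp [ip, lap, Finset.mul_sum]
  rw [hL, hR]
  have e1 : ∑ v, ∑ u, ((starRingEnd ℂ) (g v) - (starRingEnd ℂ) (g u)) * ((w v u : ℝ) : ℂ) * f v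
      = (∑ v, ∑ u, (starRingEnd ℂ) (g v) * ((w v u : ℝ) : ℂ) * f v)
        - ∑ v, ∑ u, (starRingEnd ℂ) (g u) * ((w v u : ℝ) : ℂ) * f v := by
    rw [← Finset.sum_sub_distrib]
    refine Finset.sum_congr rfl fun v _ => ?_
    rw [← Finset.sum_sub_distrib]
    exact Finset.sum_congr rfl fun u _ => by ring
  have e2 : ∑ v, ∑ u, (starRingEnd ℂ) (g v) * ((f v - f u) * ((w v u : ℝ) : ℂ))
      = (∑ v, ∑ u, (starRingEnd ℂ) (g v) * ((w v u : ℝ) : ℂ) * f v)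
        - ∑ v, ∑ u, (starRingEnd ℂ) (g v) * ((w v u : ℝ) : ℂ) * f u := by
    rw [← Finset.sum_sub_distrib]
    refine Finset.sum_congr rfl fun v _ => ?_
    rw [← Finset.sum_sub_distrib]
    exact Finset.sum_congr rfl fun u _ => by ring
  have e3 : ∑ v, ∑ u, (starRingEnd ℂ) (g u) * ((w v u : ℝ) : ℂ) * f v
      = ∑ v, ∑ u, (starRingEnd ℂ) (g v) * ((w v u : ℝ) : ℂ) * f u := by
    rw [Finset.sum_comm]
    exact Finset.sum_congr rfl fun v _ => Finset.sum_congr rfl fun u _ => by rw [hsymm]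
  rw [e1, e2, e3]

/-- The Laplacian as a linear map on Euclidean space. -/
noncomputable def lapT (w : V → V → ℝ) : EuclideanSpace ℂ V →ₗ[ℂ] EuclideanSpace ℂ V where
  toFun x := toE (lap w (x : V → ℂ))
  map_add' x y := by
    ext v
    show lap w (fun v => x v + y v) v = lap w (x : V → ℂ) v + lap w (y : V → ℂ) v
    simp only [lap]
    rw [← Finset.sum_add_distrib]
    exact Finset.sum_congr rfl fun u _ => by ring
  map_smul' c x := by
    ext v
    show lap w (fun v => c * x v) v = c * lap w (x : V → ℂ) v
    simp only [lap]
    rw [Finset.mul_sum]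
    exact Finset.sum_congr rfl fun u _ => by ring

lemma lapT_symm (w : V → V → ℝ) (hsymm : ∀ u v, w u v = w v u) :
    (lapT (V := V) w).IsSymmetric := by
  intro x y
  show (inner ℂ (toE (lap w (x : V → ℂ))) y : ℂ) = inner ℂ x (toE (lap w (y : V → ℂ)))
  rw [ip_eq_inner, ip_eq_inner]
  exact ip_lap_symm w hsymm _ _

/-- The spectral gap estimate: if `∑ h = 0` then `lam1 ‖h‖² ≤ ‖∇h‖²`. -/
lemma spectral_gap (w : V → V → ℝ) (hsymm : ∀ u v, w u v = w v u)
    (hnn : ∀ u v, 0 ≤ w u v) (hconn : GraphConnected w)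
    (lam1 : ℝ) (hlam : IsFirstNonzeroEig w lam1)
    (h : V → ℂ) (hsum : ∑ v, h v = 0) :
    lam1 * nsq h ≤ gradSq w h := by
  classical
  have hn : Module.finrank ℂ (EuclideanSpace ℂ V) = Fintype.card V := finrank_euclideanSpace
  set n := Fintype.card V with hndef
  have hT := lapT_symm w hsymm
  set b := hT.eigenvectorBasis hn with hb
  set μ := hT.eigenvalues hn with hμ
  set H : EuclideanSpace ℂ V := toE h with hH
  set c : Fin n → ℂ := fun i => b.repr H i with hc
  -- eigen equations
  have hA : ∀ i, lapT w (b i) = (μ i : ℂ) • b i := fun i => hT.apply_eigenvectorBasis hn i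
  have hAfun : ∀ i, lap w ((b i : V → ℂ)) = fun v => (μ i : ℂ) * (b i : V → ℂ) v := by
    intro i
    funext v
    have := congrFun (congrArg WithLp.ofLp (hA i)) v
    exact this
  have hbne : ∀ i, (b i : V → ℂ) ≠ 0 := by
    intro i h0
    have h1 : ‖b i‖ = 1 := b.orthonormal.1 i
    have : b i = (0 : EuclideanSpace ℂ V) := WithLp.ofLp_injective 2 h0
    rw [this] at h1
    simp at h1
  have hB : ∀ i, μ i = 0 ∨ lam1 ≤ μ i := fun i => hlam.2.2 (μ i) _ (hbne i) (hAfun i)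
  -- zero eigenvalue ⇒ coefficient vanishes
  have hC : ∀ i, μ i = 0 → c i = 0 := by
    intro i hμ0
    -- lap of b i is zero
    have hz : lap w ((b i : V → ℂ)) = 0 := by
      rw [hAfun i, hμ0]
      funext v; simp
    -- gradSq of b i is zero
    have hg0 : gradSq w ((b i : V → ℂ)) = 0 := by
      have := ip_lap_eq_gradSq w hsymm ((b i : V → ℂ))
      rw [hz] at this
      have hz2 : ip ((b i : V → ℂ)) (0 : V → ℂ) = 0 := by simp [ip]
      rw [hz2] at this
      exact_mod_cast this.symm
    -- each edge term is zero
    have hterm : ∀ u v, 0 < w u v → (b i : V → ℂ) u = (b i : V → ℂ) v := by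
      intro u v hw
      have hsum0 : ∑ u, ∑ v, ‖(b i : V → ℂ) u - (b i : V → ℂ) v‖ ^ 2 * w u v = 0 := by
        have : (1 / 2 : ℝ) * ∑ u, ∑ v, ‖(b i : V → ℂ) u - (b i : V → ℂ) v‖ ^ 2 * w u v = 0 :=
          hg0
        linarith
      have hnn2 : ∀ u ∈ Finset.univ (α := V),
          0 ≤ ∑ v, ‖(b i : V → ℂ) u - (b i : V → ℂ) v‖ ^ 2 * w u v := by
        intro u _
        exact Finset.sum_nonneg fun v _ => mul_nonneg (sq_nonneg _) (hnn u v)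
      have hrow := (Finset.sum_eq_zero_iff_of_nonneg hnn2).mp hsum0 u (Finset.mem_univ u)
      have hnn3 : ∀ v ∈ Finset.univ (α := V),
          0 ≤ ‖(b i : V → ℂ) u - (b i : V → ℂ) v‖ ^ 2 * w u v :=
        fun v _ => mul_nonneg (sq_nonneg _) (hnn u v)
      have hcell := (Finset.sum_eq_zero_iff_of_nonneg hnn3).mp hrow v (Finset.mem_univ v)
      have : ‖(b i : V → ℂ) u - (b i : V → ℂ) v‖ ^ 2 = 0 := by
        rcases mul_eq_zero.mp hcell with h' | h'
        · exact h'
        · exact absurd h' (ne_of_gt hw)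
      have := pow_eq_zero_iff (n := 2) (by norm_num) |>.mp this
      exact sub_eq_zero.mp (norm_eq_zero.mp this)
    -- b i is constant
    have hconst : ∀ u v : V, (b i : V → ℂ) u = (b i : V → ℂ) v := by
      intro u v
      induction hconn u v with
      | refl => rfl
      | tail _ hw ih => exact ih.trans (hterm _ _ hw)
    -- coefficient
    have hcoef : c i = inner ℂ (b i) H := b.repr_apply_apply H i
    have : (inner ℂ (b i) H : ℂ) = ∑ v, (starRingEnd ℂ) ((b i : V → ℂ) v) * h v := by
      rw [ip_eq_inner]; rfl
    obtain ⟨u0⟩ := Fintype.card_pos_iff.mp (hndef ▸ i.pos)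
    have hsum2 : ∑ v, (starRingEnd ℂ) ((b i : V → ℂ) v) * h v
        = (starRingEnd ℂ) ((b i : V → ℂ) u0) * ∑ v, h v := by
      rw [Finset.mul_sum]
      exact Finset.sum_congr rfl fun v _ => by rw [hconst v u0]
    have hsumE : ∑ v, h v = (0 : ℂ) := hsum
    rw [hcoef, this, hsum2, hsumE, mul_zero]
  -- Parseval identities
  have hinner : ∀ x y : EuclideanSpace ℂ V,
      (inner ℂ x y : ℂ) = ∑ i, (starRingEnd ℂ) (b.repr x i) * (b.repr y i) := by
    intro x y
    rw [← b.repr.inner_map_map x y, PiLp.inner_apply]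
    exact Finset.sum_congr rfl fun i _ => RCLike.inner_apply' _ _
  have hnsq : nsq h = ∑ i, ‖c i‖ ^ 2 := by
    have h1 : (inner ℂ H H : ℂ) = ((nsq h : ℝ) : ℂ) := by rw [ip_eq_inner]; exact ip_self h
    have h2 : (inner ℂ H H : ℂ) = ((∑ i, ‖c i‖ ^ 2 : ℝ) : ℂ) := by
      rw [hinner H H]
      push_cast
      refine Finset.sum_congr rfl fun i _ => ?_
      rw [RCLike.conj_mul]
      simp only [hc]
      rfl
    exact Complex.ofReal_injective (h1.symm.trans h2)
  have hreprT : ∀ i, b.repr (lapT w H) i = (μ i : ℂ) * c i := by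
    intro i
    rw [b.repr_apply_apply]
    rw [← hT (b i) H, hA i, inner_smul_left, Complex.conj_ofReal, ← b.repr_apply_apply]
  have hgrad : gradSq w h = ∑ i, μ i * ‖c i‖ ^ 2 := by
    have h1 : (inner ℂ H (lapT w H) : ℂ) = ((gradSq w h : ℝ) : ℂ) := by
      rw [ip_eq_inner]
      exact ip_lap_eq_gradSq w hsymm h
    have h2 : (inner ℂ H (lapT w H) : ℂ) = ((∑ i, μ i * ‖c i‖ ^ 2 : ℝ) : ℂ) := by
      rw [hinner]
      push_cast
      refine Finset.sum_congr rfl fun i _ => ?_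
      rw [hreprT i]
      have : (starRingEnd ℂ) (c i) * c i = ((‖c i‖ : ℝ) : ℂ) ^ 2 := RCLike.conj_mul _
      calc (starRingEnd ℂ) (c i) * ((μ i : ℂ) * c i)
          = (μ i : ℂ) * ((starRingEnd ℂ) (c i) * c i) := by ring
        _ = (μ i : ℂ) * ((‖c i‖ : ℝ) : ℂ) ^ 2 := by rw [this]
    have h12 : ((gradSq w h : ℝ) : ℂ) = ((∑ i, μ i * ‖c i‖ ^ 2 : ℝ) : ℂ) := h1.symm.trans h2
    exact Complex.ofReal_injective h12
  rw [hnsq, hgrad, Finset.mul_sum]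
  refine Finset.sum_le_sum fun i _ => ?_
  rcases hB i with h0 | hge
  · rw [h0, hC i h0]
    simp
  · exact mul_le_mul_of_nonneg_right hge (sq_nonneg _)

end helpers

/-- Corollary 3.2: if `Ψ(φ₀) = ⟨ψ, φ₀⟩ ≠ 0` then for every `f ∈ ℓ²(G)`,
`‖f − (Ψ(f)/Ψ(φ₀))φ₀‖² ≤ (‖ψ‖²/(λ₁|Ψ(φ₀)|²))‖∇f‖²`. -/
theorem stmt3 {V : Type*} [Fintype V] (w : V → V → ℝ)
    (hsymm : ∀ u v, w u v = w v u) (hnn : ∀ u v, 0 ≤ w u v) (hdiag : ∀ v, w v v = 0)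
    (hconn : GraphConnected w) (hcard : 1 < Fintype.card V)
    (lam1 : ℝ) (hlam : IsFirstNonzeroEig w lam1)
    (φ0 : V → ℂ) (hφ0 : φ0 = fun _ => ((1 / Real.sqrt (Fintype.card V) : ℝ) : ℂ))
    (ψ : V → ℂ) (hnz : ip ψ φ0 ≠ 0)
    (f : V → ℂ) :
    nsq (fun v => f v - (ip ψ f / ip ψ φ0) * φ0 v) ≤
      nsq ψ / (lam1 * ‖ip ψ φ0‖ ^ 2) * gradSq w f := by
  classical
  have hcpos : (0:ℝ) < (Fintype.card V : ℝ) := by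
    have : 0 < Fintype.card V := by omega
    exact_mod_cast this
  set r : ℝ := 1 / Real.sqrt (Fintype.card V) with hr
  have hsqpos : 0 < Real.sqrt (Fintype.card V) := Real.sqrt_pos.mpr hcpos
  have hrpos : 0 < r := by rw [hr]; positivity
  have hφv : ∀ v, φ0 v = ((r:ℝ):ℂ) := fun v => by rw [hφ0]
  have hrr : r * r = 1 / (Fintype.card V : ℝ) := by
    rw [hr, div_mul_div_comm, one_mul, Real.mul_self_sqrt hcpos.le]
  have hφφ : ip φ0 φ0 = 1 := by
    rw [ip]
    have hterm : ∀ v : V, (starRingEnd ℂ) (φ0 v) * φ0 v = ((r*r : ℝ):ℂ) := fun v => by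
      rw [hφv v, Complex.conj_ofReal]; push_cast; ring
    rw [Finset.sum_congr rfl fun v _ => hterm v, Finset.sum_const, Finset.card_univ,
      nsmul_eq_mul, hrr]
    push_cast
    field_simp
    exact div_self (by exact_mod_cast hcpos.ne')
  have hipφ : ∀ x : V → ℂ, ip φ0 x = ((r:ℝ):ℂ) * ∑ v, x v := by
    intro x
    rw [ip, Finset.mul_sum]
    exact Finset.sum_congr rfl fun v _ => by rw [hφv v, Complex.conj_ofReal]
  set cc := ip ψ f / ip ψ φ0 with hcc
  set g : V → ℂ := fun v => f v - cc * φ0 v with hg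
  have hψg : ip ψ g = 0 := by
    rw [hg, ip_sub ψ f (fun v => cc * φ0 v), ip_mulc, hcc, div_mul_cancel₀ _ hnz, sub_self]
  set a := ip φ0 g with ha
  set h : V → ℂ := fun v => g v - a * φ0 v with hh
  have hφh : ip φ0 h = 0 := by
    rw [hh, ip_sub φ0 g (fun v => a * φ0 v), ip_mulc, hφφ, mul_one, ← ha, sub_self]
  have hsumh : ∑ v, h v = 0 := by
    have h' := hφh
    rw [hipφ h] at h'
    rcases mul_eq_zero.mp h' with h'' | h''
    · exact absurd h'' (Complex.ofReal_ne_zero.mpr (ne_of_gt hrpos))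
    · exact h''
  have hhφ0 : ip h φ0 = 0 := by rw [ip_conj, hφh, map_zero]
  -- Pythagoras: nsq g = nsq h + ‖a‖²
  have hgh : g = fun v => h v + a * φ0 v := by
    funext v; rw [hh]; ring
  have hipgg : ip g g = ((nsq h : ℝ):ℂ) + ((‖a‖^2 : ℝ):ℂ) := by
    have e1 : ip h g = ((nsq h : ℝ):ℂ) := by
      rw [congrArg (ip h) hgh, ip_add h h (fun v => a * φ0 v), ip_mulc, hhφ0, mul_zero,
        add_zero, ip_self]
    have e2 : ip g h = ((nsq h : ℝ):ℂ) := by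
      rw [ip_conj, e1, Complex.conj_ofReal]
    have e3 : ip g φ0 = (starRingEnd ℂ) a := by rw [ip_conj, ← ha]
    have e0 := congrArg (ip g) hgh
    rw [e0, ip_add g h (fun v => a * φ0 v), ip_mulc, e2, e3]
    congr 1
    rw [RCLike.mul_conj]
    norm_cast
  have hPy : nsq g = nsq h + ‖a‖^2 := by
    have e := (ip_self g).symm.trans hipgg
    have e' : ((nsq g : ℝ):ℂ) = ((nsq h + ‖a‖^2 : ℝ):ℂ) := by rw [e]; push_cast; ring
    exact Complex.ofReal_injective e'
  -- the component of ψ orthogonal to φ0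
  set t := ip φ0 ψ with ht
  set p : V → ℂ := fun v => ψ v - t * φ0 v with hp
  have hφp : ip φ0 p = 0 := by
    rw [hp, ip_sub φ0 ψ (fun v => t * φ0 v), ip_mulc, hφφ, mul_one, ← ht, sub_self]
  have hpφ : ip p φ0 = 0 := by rw [ip_conj, hφp, map_zero]
  have hψφt : ip ψ φ0 = (starRingEnd ℂ) t := by rw [ht, ip_conj]
  have hnp : nsq p = nsq ψ - ‖t‖^2 := by
    have e1 : ip ψ p = ((nsq ψ:ℝ):ℂ) - t * (starRingEnd ℂ) t := by
      rw [congrArg (ip ψ) hp, ip_sub ψ ψ (fun v => t * φ0 v), ip_mulc, ip_self, hψφt]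
    have e2 : ip p ψ = ((nsq ψ:ℝ):ℂ) - ((‖t‖^2:ℝ):ℂ) := by
      rw [ip_conj, e1, map_sub, Complex.conj_ofReal, map_mul, Complex.conj_conj]
      congr 1
      rw [mul_comm, RCLike.mul_conj]
      norm_cast
    have e3 : ip p p = ((nsq ψ:ℝ):ℂ) - ((‖t‖^2:ℝ):ℂ) := by
      rw [congrArg (ip p) hp, ip_sub p ψ (fun v => t * φ0 v), ip_mulc, hpφ, mul_zero,
        sub_zero, e2]
    have e := (ip_self p).symm.trans e3
    have e' : ((nsq p : ℝ):ℂ) = ((nsq ψ - ‖t‖^2 : ℝ):ℂ) := by rw [e]; push_cast; ring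
    exact Complex.ofReal_injective e'
  have hψh' : ip ψ h = -(a * ip ψ φ0) := by
    rw [hh, ip_sub ψ g (fun v => a * φ0 v), ip_mulc, hψg, zero_sub]
  have hhψp : ip h p = ip h ψ := by
    rw [congrArg (ip h) hp, ip_sub h ψ (fun v => t * φ0 v), ip_mulc, hhφ0, mul_zero, sub_zero]
  have hnormhψ : ‖ip h ψ‖^2 = ‖a‖^2 * ‖ip ψ φ0‖^2 := by
    rw [ip_conj, hψh', RCLike.norm_conj, norm_neg, norm_mul, mul_pow]
  have htK : ‖t‖ = ‖ip ψ φ0‖ := by rw [hψφt, RCLike.norm_conj]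
  have key : ‖a‖^2 * ‖ip ψ φ0‖^2 ≤ nsq h * (nsq ψ - ‖ip ψ φ0‖^2) := by
    calc ‖a‖^2 * ‖ip ψ φ0‖^2 = ‖ip h ψ‖^2 := hnormhψ.symm
      _ = ‖ip h p‖^2 := by rw [hhψp]
      _ ≤ nsq h * nsq p := ip_cs h p
      _ = nsq h * (nsq ψ - ‖ip ψ φ0‖^2) := by rw [hnp, htK]
  -- spectral gap
  have hgrad : gradSq w h = gradSq w f := by
    have hfun : h = fun v => f v - (cc * ((r:ℝ):ℂ) + a * ((r:ℝ):ℂ)) := by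
      funext u
      simp only [hh, hg, hφv]
      ring
    rw [hfun, gradSq_sub_const]
  have hgap : lam1 * nsq h ≤ gradSq w f := by
    rw [← hgrad]
    exact spectral_gap w hsymm hnn hconn lam1 hlam h hsumh
  have hl1 : 0 < lam1 := hlam.1
  have hBnn : 0 ≤ nsq h := nsq_nonneg h
  have hSnn : 0 ≤ nsq ψ := nsq_nonneg ψ
  have hK : 0 < ‖ip ψ φ0‖^2 := pow_pos (norm_pos_iff.mpr hnz) 2
  rw [hPy, div_mul_eq_mul_div, le_div_iff₀ (by positivity)]
  nlinarith [mul_le_mul_of_nonneg_left key hl1.le, mul_le_mul_of_nonneg_left hgap hSnn,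
    mul_nonneg (mul_nonneg hl1.le hK.le) (norm_nonneg a), sq_nonneg (‖a‖)]
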